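/- The set Cov(S) of all refinements of the a.e. canonical covering of the display poset of a regular abstract merge tree S is a lattice: with the partial order 𝒪 < 𝒪' iff 𝒪 refines 𝒪', every pair 𝒪, 𝒪' has a least upper bound given by the path-connected components of the union ⋃{U : U ∈ 𝒪 or U ∈ 𝒪'}, and a greatest lower bound given by { U ∩ U' : U ∈ 𝒪, U' ∈ 𝒪' }. -/

import Mathlib

/-- A persistent set: a functor from the poset `(ℝ, ≤)` to `Sets`. -/
structure PersistentSet where
  obj : ℝ → Type
  map : ∀ {s t : ℝ}, s ≤ t → obj s → obj t
  map_id : ∀ (t : ℝ) (x : obj t), map le_rfl x = x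
  map_comp : ∀ {s t u : ℝ} (h₁ : s ≤ t) (h₂ : t ≤ u) (x : obj s),
    map h₂ (map h₁ x) = map (h₁.trans h₂) x

def IsMergeTreeCriticalSet (S : PersistentSet) (C : Finset ℝ) : Prop :=
  (∀ t : ℝ, (∀ c ∈ C, t < c) → IsEmpty (S.obj t)) ∧
  (∀ t : ℝ, (∀ c ∈ C, c < t) → ∃ x : S.obj t, ∀ y : S.obj t, y = x) ∧
  (∀ (s t : ℝ) (h : s ≤ t), (∀ c ∈ C, c < s ∨ t < c) → Function.Bijective (S.map h))

/-- A (finite) abstract merge tree. -/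
def IsAbstractMergeTree (S : PersistentSet) : Prop :=
  (∀ t : ℝ, Finite (S.obj t)) ∧ ∃ C : Finset ℝ, IsMergeTreeCriticalSet S C

/-- The display poset `D_S = ⋃_t S(t) × {t}`. -/
def Display (S : PersistentSet) : Type := Σ _t : ℝ, S.obj _t

/-- The partial order of the display poset: `(a,t) ≤ (b,t')` iff `t ≤ t'` and
`S(t ≤ t')(a) = b`.  The height of `p : Display S` is `p.1`. -/
def DispLe (S : PersistentSet) (p q : Display S) : Prop :=
  ∃ h : p.1 ≤ q.1, S.map h p.2 = q.2

/-- The pseudo-distance `d((a,t),(b,t')) = (t̃ - t) + (t̃ - t')`, where `t̃` is the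
infimum of the heights of common ancestors of the two points. -/
noncomputable def dDisp (S : PersistentSet) (p q : Display S) : ℝ :=
  2 * sInf {t : ℝ | ∃ r : Display S, DispLe S p r ∧ DispLe S q r ∧ r.1 = t} - p.1 - q.1

open MeasureTheory
open scoped ENNReal

/-- `S` is regular. -/
def RegularPS (S : PersistentSet) : Prop :=
  ∀ t : ℝ, ∃ ε > (0 : ℝ), ∀ (t' : ℝ) (h : t ≤ t'), t' < t + ε → Function.Bijective (S.map h)

/-- Strict order on the display poset. -/
def DispLt (S : PersistentSet) (p q : Display S) : Prop := DispLe S p q ∧ p ≠ q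

/-- The topology on the display poset generated by the open balls of `dDisp`. -/
noncomputable def dispTopology (S : PersistentSet) : TopologicalSpace (Display S) :=
  TopologicalSpace.generateFrom
    {B | ∃ (p : Display S) (ε : ℝ), B = {q : Display S | dDisp S p q < ε}}

/-- Leaves of the display poset: minimal points. -/
def IsLeafPt (S : PersistentSet) (p : Display S) : Prop :=
  ∀ q : Display S, DispLe S q p → q = p

/-- Merge points: least common ancestors of two incomparable points. -/
def IsMergePt (S : PersistentSet) (p : Display S) : Prop :=
  ∃ q r : Display S, DispLt S q p ∧ DispLt S r p ∧ ¬ DispLe S q r ∧ ¬ DispLe S r q ∧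
    ∀ p' : Display S, DispLe S q p' → DispLe S r p' → DispLe S p p'

/-- The vertices of the merge tree `𝓜(S)` seen inside the display poset. -/
def CriticalVerts (S : PersistentSet) : Set (Display S) :=
  {p | IsLeafPt S p ∨ IsMergePt S p}

/-- The open "edge region" above a vertex `v` of a vertex set `V ⊆ D_S`: the points
strictly between `v` and the next vertex of `V` above it (all points above `v` if there
is none), i.e. the open set corresponding to the edge `(v, father v)`. -/
def edgeRegion (S : PersistentSet) (V : Set (Display S)) (v : Display S) :
    Set (Display S) :=
  {p | DispLt S v p ∧ ∀ w ∈ V, ¬ (DispLt S v w ∧ DispLe S w p)}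

/-- The covering of the display poset induced by a vertex set `V ⊆ D_S`: one edge region
for each vertex. -/
def coverOf (S : PersistentSet) (V : Set (Display S)) : Set (Set (Display S)) :=
  (edgeRegion S V) '' V

/-- The a.e. canonical covering of the display poset, induced by the vertices of the
merge tree `𝓜(S)` (the merge tree without order-2 vertices). -/
def canonicalCover (S : PersistentSet) : Set (Set (Display S)) :=
  coverOf S (CriticalVerts S)

/-- The canonical measure `μ_S(Q) = Σ_{U ∈ 𝒰(D_S)} ℒ(h(U ∩ Q))` on the display poset. -/
noncomputable def dispMeasure (S : PersistentSet) (Q : Set (Display S)) : ℝ≥0∞ :=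
  ∑' U : canonicalCover S, volume ((fun q : Display S => q.1) '' ((U : Set (Display S)) ∩ Q))

/-- `𝒪` refines `𝒪'`: every member of `𝒪` is contained in some member of `𝒪'`. -/
def Refines {X : Type} (𝒪 𝒪' : Set (Set X)) : Prop :=
  ∀ U ∈ 𝒪, ∃ U' ∈ 𝒪', U ⊆ U'

/-- A regular a.e. covering of the display poset which refines the canonical one:
disjoint, open, path-connected sets, each contained in a canonical set, covering
`D_S` up to a `μ_S`-null set. -/
def IsRegularAECover (S : PersistentSet) (𝒪 : Set (Set (Display S))) : Prop :=
  (∀ U ∈ 𝒪, @IsOpen _ (dispTopology S) U) ∧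
  𝒪.PairwiseDisjoint id ∧
  (∀ U ∈ 𝒪, @IsPathConnected _ (dispTopology S) U) ∧
  Refines 𝒪 (canonicalCover S) ∧
  dispMeasure S ((⋃₀ 𝒪)ᶜ) = 0

/-- `Cov(S)`: the set of all refinements of the a.e. canonical covering. -/
def CovSet (S : PersistentSet) : Set (Set (Set (Display S))) :=
  {𝒪 | IsRegularAECover S 𝒪}

namespace AuxMT


variable {S : PersistentSet}

lemma le_refl' (p : Display S) : DispLe S p p := ⟨le_rfl, S.map_id _ _⟩

lemma le_trans' {p q r : Display S} (h₁ : DispLe S p q) (h₂ : DispLe S q r) :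
    DispLe S p r := by
  obtain ⟨h, e⟩ := h₁; obtain ⟨h', e'⟩ := h₂
  exact ⟨h.trans h', by rw [← S.map_comp h h', e, e']⟩

lemma height_mono {p q : Display S} (h : DispLe S p q) : p.1 ≤ q.1 := h.1

/-- the lift of `v` to height `t` -/
def lift (v : Display S) {t : ℝ} (h : v.1 ≤ t) : Display S := ⟨t, S.map h v.2⟩

lemma le_lift (v : Display S) {t : ℝ} (h : v.1 ≤ t) : DispLe S v (lift v h) := ⟨h, rfl⟩

/-- uniqueness of points above `v` at a given height -/
lemma eq_of_le_of_le_of_height_eq {v p q : Display S} (hp : DispLe S v p)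
    (hq : DispLe S v q) (h : p.1 = q.1) : p = q := by
  obtain ⟨h1, e1⟩ := hp; obtain ⟨h2, e2⟩ := hq
  cases p with | mk t a => cases q with | mk t' b =>
  dsimp at h; subst h
  dsimp at e1 e2
  have : a = b := by rw [← e1, ← e2]
  rw [this]

/-- comparability of points above `v` -/
lemma le_of_le_of_le_of_height_le {v p q : Display S} (hp : DispLe S v p)
    (hq : DispLe S v q) (h : p.1 ≤ q.1) : DispLe S p q := by
  obtain ⟨h1, e1⟩ := hp; obtain ⟨h2, e2⟩ := hq
  refine ⟨h, ?_⟩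
  rw [← e1, ← e2, S.map_comp h1 h]

lemma le_antisymm' {p q : Display S} (h₁ : DispLe S p q) (h₂ : DispLe S q p) : p = q :=
  eq_of_le_of_le_of_height_eq (le_refl' p) h₁ (le_antisymm h₁.1 h₂.1)


end AuxMT

namespace AuxMT
variable {S : PersistentSet}

/-- heights of common ancestors -/
def ancSet (S : PersistentSet) (p q : Display S) : Set ℝ :=
  {t : ℝ | ∃ r : Display S, DispLe S p r ∧ DispLe S q r ∧ r.1 = t}

lemma dDisp_eq (p q : Display S) :
    dDisp S p q = 2 * sInf (ancSet S p q) - p.1 - q.1 := rfl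

lemma ancSet_bddBelow (p q : Display S) : BddBelow (ancSet S p q) := by
  refine ⟨p.1, fun t ht => ?_⟩
  obtain ⟨r, hpr, -, rfl⟩ := ht
  exact hpr.1

lemma mem_ancSet_lb {p q : Display S} {t : ℝ} (ht : t ∈ ancSet S p q) :
    p.1 ≤ t ∧ q.1 ≤ t := by
  obtain ⟨r, hpr, hqr, rfl⟩ := ht
  exact ⟨hpr.1, hqr.1⟩

lemma ancSet_upward {p q : Display S} {t t' : ℝ} (ht : t ∈ ancSet S p q) (h : t ≤ t') :
    t' ∈ ancSet S p q := by
  obtain ⟨r, hpr, hqr, rfl⟩ := ht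
  exact ⟨lift r h, le_trans' hpr (le_lift r h), le_trans' hqr (le_lift r h), rfl⟩

lemma ancSet_nonempty (hS : IsAbstractMergeTree S) (p q : Display S) :
    (ancSet S p q).Nonempty := by
  obtain ⟨-, C, -, h2, -⟩ := hS
  set t₀ : ℝ := max (max p.1 q.1) ((insert (0:ℝ) C).max' ⟨0, Finset.mem_insert_self 0 C⟩ + 1)
    with ht₀
  have hC : ∀ c ∈ C, c < t₀ := fun c hc =>
    lt_of_lt_of_le (lt_of_le_of_lt (Finset.le_max' _ c (Finset.mem_insert_of_mem hc))
      (lt_add_one _)) (le_max_right _ _)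
  obtain ⟨x, hx⟩ := h2 t₀ hC
  have hp : p.1 ≤ t₀ := le_trans (le_max_left _ _) (le_max_left _ _)
  have hq : q.1 ≤ t₀ := le_trans (le_max_right _ _) (le_max_left _ _)
  refine ⟨t₀, lift p hp, le_lift p hp, ⟨hq, ?_⟩, rfl⟩
  show S.map hq q.2 = S.map hp p.2
  rw [hx (S.map hq q.2), hx (S.map hp p.2)]

lemma sInf_ancSet_ge_left (p q : Display S) (hne : (ancSet S p q).Nonempty) :
    p.1 ≤ sInf (ancSet S p q) :=
  le_csInf hne fun t ht => (mem_ancSet_lb ht).1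

lemma sInf_ancSet_ge_right (p q : Display S) (hne : (ancSet S p q).Nonempty) :
    q.1 ≤ sInf (ancSet S p q) :=
  le_csInf hne fun t ht => (mem_ancSet_lb ht).2

lemma dDisp_self (p : Display S) : dDisp S p p = 0 := by
  have hmem : p.1 ∈ ancSet S p p := ⟨p, le_refl' p, le_refl' p, rfl⟩
  have h : sInf (ancSet S p p) = p.1 :=
    le_antisymm (csInf_le (ancSet_bddBelow p p) hmem)
      (sInf_ancSet_ge_left p p ⟨p.1, hmem⟩)
  rw [dDisp_eq, h]; ring

lemma abs_sub_height_le_dDisp (hS : IsAbstractMergeTree S) (p q : Display S) :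
    |p.1 - q.1| ≤ dDisp S p q := by
  have hne := ancSet_nonempty hS p q
  have h1 := sInf_ancSet_ge_left p q hne
  have h2 := sInf_ancSet_ge_right p q hne
  rw [dDisp_eq, abs_sub_le_iff]
  constructor <;> linarith

lemma dDisp_nonneg (hS : IsAbstractMergeTree S) (p q : Display S) :
    0 ≤ dDisp S p q := le_trans (abs_nonneg _) (abs_sub_height_le_dDisp hS p q)

/-- The least common ancestor is attained (regularity). -/
lemma sInf_mem_ancSet (hS : IsAbstractMergeTree S) (hreg : RegularPS S)
    (p q : Display S) : sInf (ancSet S p q) ∈ ancSet S p q := by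
  have hne := ancSet_nonempty hS p q
  set tinf := sInf (ancSet S p q) with htinfdef
  have hp : p.1 ≤ tinf := sInf_ancSet_ge_left p q hne
  have hq : q.1 ≤ tinf := sInf_ancSet_ge_right p q hne
  obtain ⟨ε, hε, hbij⟩ := hreg tinf
  have hlt : tinf < tinf + ε := lt_add_of_pos_right _ hε
  obtain ⟨t, htT, htlt⟩ := (csInf_lt_iff (ancSet_bddBelow p q) hne).mp hlt
  obtain ⟨r, hpr, hqr, hrt⟩ := htT
  subst hrt
  have htinft : tinf ≤ r.1 := csInf_le (ancSet_bddBelow p q) ⟨r, hpr, hqr, rfl⟩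
  have hinj := (hbij r.1 htinft htlt).1
  have hA : S.map htinft (S.map hp p.2) = r.2 := by
    rw [S.map_comp hp htinft]
    exact hpr.2
  have hB : S.map htinft (S.map hq q.2) = r.2 := by
    rw [S.map_comp hq htinft]
    exact hqr.2
  have hAB : S.map hp p.2 = S.map hq q.2 := hinj (by rw [hA, hB])
  exact ⟨⟨tinf, S.map hp p.2⟩, ⟨hp, rfl⟩, ⟨hq, hAB.symm⟩, rfl⟩

/-- existence of least common ancestors -/
lemma exists_lca (hS : IsAbstractMergeTree S) (hreg : RegularPS S)
    (p q : Display S) : ∃ m : Display S, DispLe S p m ∧ DispLe S q m ∧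
      ∀ p' : Display S, DispLe S p p' → DispLe S q p' → DispLe S m p' := by
  obtain ⟨m, hpm, hqm, hmt⟩ := sInf_mem_ancSet hS hreg p q
  refine ⟨m, hpm, hqm, fun p' hpp' hqp' => ?_⟩
  have h1 : m.1 ≤ p'.1 := by
    rw [hmt]
    exact csInf_le (ancSet_bddBelow p q) ⟨p', hpp', hqp', rfl⟩
  exact le_of_le_of_le_of_height_le hpm hpp' h1

end AuxMT

namespace AuxMT
variable {S : PersistentSet}

lemma edgeRegion_subset_ray {V : Set (Display S)} {v p : Display S}
    (hp : p ∈ edgeRegion S V v) : DispLe S v p := hp.1.1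

lemma edgeRegion_disjoint_aux (hS : IsAbstractMergeTree S) (hreg : RegularPS S)
    {v w : Display S} (hv : v ∈ CriticalVerts S) (hw : w ∈ CriticalVerts S)
    (hvw : v ≠ w) (hle : v.1 ≤ w.1) {p : Display S}
    (hpv : p ∈ edgeRegion S (CriticalVerts S) v)
    (hpw : p ∈ edgeRegion S (CriticalVerts S) w) : False := by
  obtain ⟨⟨hvp, -⟩, hforb⟩ := hpv
  have hwp : DispLe S w p := hpw.1.1
  set v' : Display S := lift v hle with hv'def
  have hv'1 : v'.1 = w.1 := rfl
  have hvv' : DispLe S v v' := le_lift v hle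
  have hv'p : DispLe S v' p := le_of_le_of_le_of_height_le hvv' hvp (hv'1 ▸ hwp.1)
  by_cases hcase : v' = w
  · exact hforb w hw ⟨⟨hcase ▸ hvv', hvw⟩, hwp⟩
  · have hnvw : ¬ DispLe S v' w := fun h =>
      hcase (eq_of_le_of_le_of_height_eq (le_refl' v') h hv'1)
    have hnwv : ¬ DispLe S w v' := fun h =>
      hcase (eq_of_le_of_le_of_height_eq h (le_refl' w) hv'1)
    obtain ⟨m, hv'm, hwm, hmin⟩ := exists_lca hS hreg v' w
    have hv'nem : v' ≠ m := fun h => hnwv (h ▸ hwm)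
    have hwnem : w ≠ m := fun h => hnvw (h ▸ hv'm)
    have hmerge : IsMergePt S m :=
      ⟨v', w, ⟨hv'm, hv'nem⟩, ⟨hwm, hwnem⟩, hnvw, hnwv, hmin⟩
    have hvm : DispLe S v m := le_trans' hvv' hv'm
    have hvnem : v ≠ m := by
      intro h
      have h1 : m.1 ≤ w.1 := h ▸ hle
      have h2 : w = m := eq_of_le_of_le_of_height_eq (le_refl' w) hwm
        (le_antisymm hwm.1 h1)
      exact hwnem h2
    exact hforb m (Or.inr hmerge) ⟨⟨hvm, hvnem⟩, hmin p hv'p hwp⟩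

lemma canonicalCover_pairwiseDisjoint (hS : IsAbstractMergeTree S) (hreg : RegularPS S) :
    (canonicalCover S).PairwiseDisjoint id := by
  rintro W₁ ⟨v, hv, rfl⟩ W₂ ⟨w, hw, rfl⟩ hne
  have hvw : v ≠ w := fun h => hne (by rw [h])
  rw [Function.onFun, Set.disjoint_left]
  intro p hp1 hp2
  rcases le_total v.1 w.1 with h | h
  · exact edgeRegion_disjoint_aux hS hreg hv hw hvw h hp1 hp2
  · exact edgeRegion_disjoint_aux hS hreg hw hv hvw.symm h hp2 hp1

end AuxMT

namespace AuxMT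
variable {S : PersistentSet}

lemma ancSet_comm (p q : Display S) : ancSet S p q = ancSet S q p := by
  ext t
  exact ⟨fun ⟨r, h1, h2, h3⟩ => ⟨r, h2, h1, h3⟩, fun ⟨r, h1, h2, h3⟩ => ⟨r, h2, h1, h3⟩⟩

lemma dDisp_comm (p q : Display S) : dDisp S p q = dDisp S q p := by
  rw [dDisp_eq, dDisp_eq, ancSet_comm]; ring

lemma isOpen_ball (p : Display S) (ε : ℝ) :
    @IsOpen _ (dispTopology S) {q : Display S | dDisp S p q < ε} :=
  TopologicalSpace.GenerateOpen.basic _ ⟨p, ε, rfl⟩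

lemma mem_ball_self (p : Display S) {ε : ℝ} (hε : 0 < ε) :
    p ∈ {q : Display S | dDisp S p q < ε} := by
  simp only [Set.mem_setOf_eq, dDisp_self]; exact hε

lemma height_continuous (hS : IsAbstractMergeTree S) :
    @Continuous (Display S) ℝ (dispTopology S) _ (fun q => q.1) := by
  letI := dispTopology S
  rw [continuous_iff_continuousAt]
  intro p
  rw [ContinuousAt, Metric.tendsto_nhds]
  intro ε hε
  have hball : {q : Display S | dDisp S p q < ε} ∈ nhds p :=
    (isOpen_ball p ε).mem_nhds (mem_ball_self p hε)
  refine Filter.eventually_of_mem hball fun q hq => ?_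
  have h1 : |q.1 - p.1| ≤ dDisp S q p := abs_sub_height_le_dDisp hS q p
  rw [Real.dist_eq]
  calc |q.1 - p.1| ≤ dDisp S q p := h1
    _ = dDisp S p q := (dDisp_comm p q).symm
    _ < ε := hq

lemma ancSet_lift {p q q' : Display S} (h : DispLe S q q') :
    ancSet S p q' = ancSet S p q ∩ Set.Ici q'.1 := by
  ext t
  constructor
  · rintro ⟨r, hpr, hq'r, rfl⟩
    exact ⟨⟨r, hpr, le_trans' h hq'r, rfl⟩, hq'r.1⟩
  · rintro ⟨⟨r, hpr, hqr, rfl⟩, hge⟩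
    exact ⟨r, hpr, le_of_le_of_le_of_height_le h hqr hge, rfl⟩

lemma sInf_inter_Ici {T : Set ℝ} (hne : T.Nonempty) (hbdd : BddBelow T)
    (hup : ∀ ⦃t t' : ℝ⦄, t ∈ T → t ≤ t' → t' ∈ T) (s : ℝ) :
    sInf (T ∩ Set.Ici s) = max (sInf T) s := by
  rcases le_or_gt s (sInf T) with h | h
  · have hT : T ∩ Set.Ici s = T := by
      apply Set.inter_eq_self_of_subset_left
      intro t ht
      exact le_trans h (csInf_le hbdd ht)
    rw [hT, max_eq_left h]
  · obtain ⟨t₀, ht₀, ht₀s⟩ := (csInf_lt_iff hbdd hne).mp h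
    have hT : T ∩ Set.Ici s = Set.Ici s := by
      apply Set.inter_eq_self_of_subset_right
      intro u hu
      exact hup ht₀ (le_trans ht₀s.le hu)
    rw [hT, csInf_Ici, max_eq_right h.le]

lemma dDisp_of_le (hS : IsAbstractMergeTree S) (p : Display S) {q q' : Display S}
    (h : DispLe S q q') :
    dDisp S p q' = 2 * max (sInf (ancSet S p q)) q'.1 - p.1 - q'.1 := by
  rw [dDisp_eq, ancSet_lift (p := p) h,
    sInf_inter_Ici (ancSet_nonempty hS p q) (ancSet_bddBelow p q)
      (fun t t' ht h' => ancSet_upward ht h') q'.1]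

/-- Segments are joined within any set containing them. -/
lemma joinedIn_of_segment_subset (hS : IsAbstractMergeTree S) {F : Set (Display S)}
    {x y : Display S} (hxy : DispLe S x y)
    (hseg : ∀ (t : ℝ) (h1 : x.1 ≤ t), t ≤ y.1 → lift x h1 ∈ F) :
    @JoinedIn _ (dispTopology S) F x y := by
  letI := dispTopology S
  set ℓ : unitInterval → ℝ := fun u => x.1 + (u : ℝ) * (y.1 - x.1) with hℓdef
  have hxl : ∀ u : unitInterval, x.1 ≤ ℓ u := fun u => by
    have h1 : (0:ℝ) ≤ (u:ℝ) := u.2.1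
    have h2 : (0:ℝ) ≤ y.1 - x.1 := sub_nonneg.mpr hxy.1
    simp only [hℓdef]
    nlinarith
  have hly : ∀ u : unitInterval, ℓ u ≤ y.1 := fun u => by
    have h1 : (u:ℝ) ≤ 1 := u.2.2
    have h2 : (0:ℝ) ≤ y.1 - x.1 := sub_nonneg.mpr hxy.1
    simp only [hℓdef]
    nlinarith
  set g : unitInterval → Display S := fun u => lift x (hxl u) with hgdef
  have hxg : ∀ u, DispLe S x (g u) := fun u => le_lift x (hxl u)
  have hℓcont : Continuous ℓ := by
    apply Continuous.add continuous_const
    exact Continuous.mul continuous_subtype_val continuous_const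
  have hgcont : Continuous g := by
    have key : ∀ B ∈ {B | ∃ (p : Display S) (ε : ℝ),
        B = {q : Display S | dDisp S p q < ε}}, IsOpen (g ⁻¹' B) := by
      rintro B ⟨p, ε, rfl⟩
      have hpre : g ⁻¹' {q | dDisp S p q < ε} =
          (fun u => 2 * max (sInf (ancSet S p x)) (ℓ u) - p.1 - ℓ u) ⁻¹' Set.Iio ε := by
        ext u
        simp only [Set.mem_preimage, Set.mem_setOf_eq, Set.mem_Iio]
        rw [dDisp_of_le hS p (hxg u)]
        exact Iff.rfl
      rw [hpre]
      apply IsOpen.preimage _ isOpen_Iio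
      apply Continuous.sub
      apply Continuous.sub
      · exact Continuous.mul continuous_const (Continuous.max continuous_const hℓcont)
      · exact continuous_const
      · exact hℓcont
    exact continuous_generateFrom_iff.mpr key
  have hsource : g 0 = x := by
    apply eq_of_le_of_le_of_height_eq (hxg 0) (le_refl' x)
    show ℓ 0 = x.1
    simp [hℓdef]
  have htarget : g 1 = y := by
    apply eq_of_le_of_le_of_height_eq (hxg 1) hxy
    show ℓ 1 = y.1
    simp [hℓdef]
  refine ⟨⟨⟨g, hgcont⟩, hsource, htarget⟩, fun t => ?_⟩
  exact hseg (ℓ t) (hxl t) (hly t)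

/-- IVT: a path-connected subset of a ray contains the segment between two of its
points. -/
lemma segment_mem (hS : IsAbstractMergeTree S) {U : Set (Display S)}
    (hU : @IsPathConnected _ (dispTopology S) U) {v : Display S}
    (hray : ∀ p ∈ U, DispLe S v p) {x y z : Display S} (hx : x ∈ U) (hy : y ∈ U)
    (hxz : DispLe S x z) (hzy : z.1 ≤ y.1) : z ∈ U := by
  letI := dispTopology S
  obtain ⟨γ, hγ⟩ := hU.joinedIn x hx y hy
  have hcont : Continuous (fun t : unitInterval => (γ t).1) :=
    (height_continuous hS).comp γ.continuous
  have hIcc : z.1 ∈ Set.Icc ((fun t : unitInterval => (γ t).1) 0)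
      ((fun t : unitInterval => (γ t).1) 1) := by
    simp only [Path.source, Path.target]
    exact ⟨hxz.1, hzy⟩
  obtain ⟨t₀, ht₀⟩ := intermediate_value_univ 0 1 hcont hIcc
  have h1 : DispLe S v (γ t₀) := hray _ (hγ t₀)
  have h2 : DispLe S v z := le_trans' (hray x hx) hxz
  have h3 : z = γ t₀ := eq_of_le_of_le_of_height_eq h2 h1 ht₀.symm
  rw [h3]
  exact hγ t₀

end AuxMT

namespace AuxMT

section TopLemmas
variable {X : Type} [TopologicalSpace X]

lemma isOpen_pathComponentIn_sUnion {𝒞 : Set (Set X)} (hop : ∀ U ∈ 𝒞, IsOpen U)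
    (hpc : ∀ U ∈ 𝒞, IsPathConnected U) (x : X) :
    IsOpen (pathComponentIn (⋃₀ 𝒞) x) := by
  have heq : pathComponentIn (⋃₀ 𝒞) x =
      ⋃₀ {U | U ∈ 𝒞 ∧ U ⊆ pathComponentIn (⋃₀ 𝒞) x} := by
    apply Set.Subset.antisymm
    · intro y hy
      obtain ⟨U, hU, hyU⟩ := pathComponentIn_subset hy
      refine ⟨U, ⟨hU, ?_⟩, hyU⟩
      have h1 : U ⊆ pathComponentIn (⋃₀ 𝒞) y :=
        (hpc U hU).subset_pathComponentIn hyU (Set.subset_sUnion_of_mem hU)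
      rwa [pathComponentIn_congr hy] at h1
    · rintro y ⟨U, ⟨-, hU2⟩, hyU⟩
      exact hU2 hyU
  rw [heq]
  exact isOpen_sUnion fun U hU => hop U hU.1

lemma pathComponentIn_disj {F : Set X} {x y : X}
    (h : pathComponentIn F x ≠ pathComponentIn F y) :
    Disjoint (pathComponentIn F x) (pathComponentIn F y) := by
  rw [Set.disjoint_left]
  intro z hzx hzy
  exact h ((pathComponentIn_congr hzx).symm.trans (pathComponentIn_congr hzy))

/-- Key lemma: a path component of the union of an open covering refining a disjoint
family is contained in a single member of the disjoint family. -/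
lemma pathComponentIn_subset_of_refines {𝒞 Pfam : Set (Set X)}
    (hop : ∀ U ∈ 𝒞, IsOpen U) (href : Refines 𝒞 Pfam) (hdisj : Pfam.PairwiseDisjoint id)
    {x : X} {U₀ V₀ : Set X} (hU₀ : U₀ ∈ 𝒞) (hxU₀ : x ∈ U₀) (hV₀ : V₀ ∈ Pfam)
    (hU₀V₀ : U₀ ⊆ V₀) : pathComponentIn (⋃₀ 𝒞) x ⊆ V₀ := by
  intro y hy
  obtain ⟨γ, hγ⟩ := hy
  set A : Set X := ⋃₀ {U | U ∈ 𝒞 ∧ U ⊆ V₀} with hA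
  set B : Set X := ⋃₀ {U | U ∈ 𝒞 ∧ ¬ U ⊆ V₀} with hB
  have hAopen : IsOpen A := isOpen_sUnion fun U hU => hop U hU.1
  have hBopen : IsOpen B := isOpen_sUnion fun U hU => hop U hU.1
  have hdisjAB : Disjoint A B := by
    rw [Set.disjoint_left]
    rintro p ⟨U, ⟨hU, hUV⟩, hpU⟩ ⟨U', ⟨hU', hUV'⟩, hpU'⟩
    obtain ⟨V', hV', hsub⟩ := href U' hU'
    have hne : V' ≠ V₀ := fun h => hUV' (h ▸ hsub)
    exact (Set.disjoint_left.mp (hdisj hV' hV₀ hne) (hsub hpU')) (hUV hpU)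
  have hrange : Set.range γ ⊆ A ∪ B := by
    rintro p ⟨t, rfl⟩
    obtain ⟨U, hU, hpU⟩ := hγ t
    by_cases h : U ⊆ V₀
    · exact Or.inl ⟨U, ⟨hU, h⟩, hpU⟩
    · exact Or.inr ⟨U, ⟨hU, h⟩, hpU⟩
  have hconn : IsPreconnected (Set.range γ) := isPreconnected_range γ.continuous
  have hsubA : Set.range γ ⊆ A := by
    apply hconn.subset_left_of_subset_union hAopen hBopen hdisjAB hrange
    exact ⟨x, ⟨⟨0, γ.source⟩, ⟨U₀, ⟨hU₀, hU₀V₀⟩, hxU₀⟩⟩⟩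
  obtain ⟨U, ⟨-, hUV⟩, hyU⟩ := hsubA ⟨1, γ.target⟩
  exact hUV hyU

end TopLemmas

section MeasLemmas
variable {S : PersistentSet}

lemma dispMeasure_mono {A B : Set (Display S)} (h : A ⊆ B) :
    dispMeasure S A ≤ dispMeasure S B := by
  apply Summable.tsum_le_tsum _ ENNReal.summable ENNReal.summable
  intro U
  exact measure_mono (Set.image_mono (Set.inter_subset_inter_right _ h))

lemma dispMeasure_null_of_subset {A B : Set (Display S)} (h : A ⊆ B)
    (hB : dispMeasure S B = 0) : dispMeasure S A = 0 :=
  le_antisymm (hB ▸ dispMeasure_mono h) zero_le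

lemma dispMeasure_union_null {A B : Set (Display S)} (hA : dispMeasure S A = 0)
    (hB : dispMeasure S B = 0) : dispMeasure S (A ∪ B) = 0 := by
  have hle : dispMeasure S (A ∪ B) ≤ dispMeasure S A + dispMeasure S B := by
    rw [dispMeasure, dispMeasure, dispMeasure, ← ENNReal.tsum_add]
    apply Summable.tsum_le_tsum _ ENNReal.summable ENNReal.summable
    intro U
    have heq : (U : Set (Display S)) ∩ (A ∪ B) = ((U : Set (Display S)) ∩ A) ∪
        ((U : Set (Display S)) ∩ B) := Set.inter_union_distrib_left _ _ _
    rw [heq, Set.image_union]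
    exact measure_union_le _ _
  rw [hA, hB, add_zero] at hle
  exact le_antisymm hle zero_le

end MeasLemmas
end AuxMT

namespace AuxMT
variable {S : PersistentSet}

lemma partJ (S : PersistentSet) (hS : IsAbstractMergeTree S) (hreg : RegularPS S)
    (𝒪 𝒪' : Set (Set (Display S))) (h𝒪 : 𝒪 ∈ CovSet S) (h𝒪' : 𝒪' ∈ CovSet S) :
    {W | ∃ x ∈ ⋃₀ (𝒪 ∪ 𝒪'),
        W = @pathComponentIn _ (dispTopology S) (⋃₀ (𝒪 ∪ 𝒪')) x} ∈ CovSet S ∧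
    Refines 𝒪 {W | ∃ x ∈ ⋃₀ (𝒪 ∪ 𝒪'),
        W = @pathComponentIn _ (dispTopology S) (⋃₀ (𝒪 ∪ 𝒪')) x} ∧
    Refines 𝒪' {W | ∃ x ∈ ⋃₀ (𝒪 ∪ 𝒪'),
        W = @pathComponentIn _ (dispTopology S) (⋃₀ (𝒪 ∪ 𝒪')) x} ∧
    ∀ P ∈ CovSet S, Refines 𝒪 P → Refines 𝒪' P →
      Refines {W | ∃ x ∈ ⋃₀ (𝒪 ∪ 𝒪'),
        W = @pathComponentIn _ (dispTopology S) (⋃₀ (𝒪 ∪ 𝒪')) x} P := by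
  letI := dispTopology S
  obtain ⟨hop, hdisj, hpc, href, hnull⟩ := h𝒪
  obtain ⟨hop', hdisj', hpc', href', hnull'⟩ := h𝒪'
  set 𝒞 : Set (Set (Display S)) := 𝒪 ∪ 𝒪' with h𝒞
  have hopC : ∀ U ∈ 𝒞, IsOpen U := fun U hU => hU.elim (hop U) (hop' U)
  have hpcC : ∀ U ∈ 𝒞, IsPathConnected U := fun U hU => hU.elim (hpc U) (hpc' U)
  have hrefC : Refines 𝒞 (canonicalCover S) := fun U hU => hU.elim (href U) (href' U)
  set J : Set (Set (Display S)) :=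
    {W | ∃ x ∈ ⋃₀ 𝒞, W = pathComponentIn (⋃₀ 𝒞) x} with hJ
  have hsub : ⋃₀ 𝒪 ⊆ ⋃₀ J := by
    rintro x ⟨U, hU, hxU⟩
    have hxF : x ∈ ⋃₀ 𝒞 := ⟨U, Or.inl hU, hxU⟩
    exact ⟨pathComponentIn (⋃₀ 𝒞) x, ⟨x, hxF, rfl⟩, mem_pathComponentIn_self hxF⟩
  have hmemJ : J ∈ CovSet S := by
    refine ⟨?_, ?_, ?_, ?_, ?_⟩
    · rintro W ⟨x, hx, rfl⟩
      exact isOpen_pathComponentIn_sUnion hopC hpcC x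
    · rintro W₁ ⟨x, hx, rfl⟩ W₂ ⟨y, hy, rfl⟩ hne
      exact pathComponentIn_disj hne
    · rintro W ⟨x, hx, rfl⟩
      exact isPathConnected_pathComponentIn hx
    · rintro W ⟨x, hx, rfl⟩
      obtain ⟨U₀, hU₀, hxU₀⟩ := hx
      obtain ⟨V₀, hV₀, hU₀V₀⟩ := hrefC U₀ hU₀
      exact ⟨V₀, hV₀, pathComponentIn_subset_of_refines hopC hrefC
        (canonicalCover_pairwiseDisjoint hS hreg) hU₀ hxU₀ hV₀ hU₀V₀⟩
    · exact dispMeasure_null_of_subset (Set.compl_subset_compl.mpr hsub) hnull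
  have hrefJ : ∀ U ∈ 𝒞, ∃ W ∈ J, U ⊆ W := by
    intro U hU
    obtain ⟨x, hxU, -⟩ := hpcC U hU
    have hxF : x ∈ ⋃₀ 𝒞 := ⟨U, hU, hxU⟩
    exact ⟨pathComponentIn (⋃₀ 𝒞) x, ⟨x, hxF, rfl⟩,
      (hpcC U hU).subset_pathComponentIn hxU (Set.subset_sUnion_of_mem hU)⟩
  refine ⟨hmemJ, fun U hU => hrefJ U (Or.inl hU), fun U hU => hrefJ U (Or.inr hU),
    ?_⟩
  rintro P hP hrP hrP' W ⟨x, hx, rfl⟩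
  obtain ⟨U₀, hU₀, hxU₀⟩ := hx
  have hrefP : Refines 𝒞 P := fun U hU => hU.elim (hrP U) (hrP' U)
  obtain ⟨V₀, hV₀, hU₀V₀⟩ := hrefP U₀ hU₀
  exact ⟨V₀, hV₀, pathComponentIn_subset_of_refines hopC hrefP hP.2.1
    hU₀ hxU₀ hV₀ hU₀V₀⟩

end AuxMT

namespace AuxMT

lemma partM (S : PersistentSet) (hS : IsAbstractMergeTree S) (hreg : RegularPS S)
    (𝒪 𝒪' : Set (Set (Display S))) (h𝒪 : 𝒪 ∈ CovSet S) (h𝒪' : 𝒪' ∈ CovSet S) :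
    {W | ∃ U ∈ 𝒪, ∃ U' ∈ 𝒪', W = U ∩ U' ∧ W.Nonempty} ∈ CovSet S ∧
    Refines {W | ∃ U ∈ 𝒪, ∃ U' ∈ 𝒪', W = U ∩ U' ∧ W.Nonempty} 𝒪 ∧
    Refines {W | ∃ U ∈ 𝒪, ∃ U' ∈ 𝒪', W = U ∩ U' ∧ W.Nonempty} 𝒪' ∧
    ∀ P ∈ CovSet S, Refines P 𝒪 → Refines P 𝒪' →
      Refines P {W | ∃ U ∈ 𝒪, ∃ U' ∈ 𝒪', W = U ∩ U' ∧ W.Nonempty} := by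
  letI := dispTopology S
  obtain ⟨hop, hdisj, hpc, href, hnull⟩ := h𝒪
  obtain ⟨hop', hdisj', hpc', href', hnull'⟩ := h𝒪'
  set M : Set (Set (Display S)) :=
    {W | ∃ U ∈ 𝒪, ∃ U' ∈ 𝒪', W = U ∩ U' ∧ W.Nonempty} with hM
  -- each member of a cover sits above a single vertex
  have hray : ∀ U ∈ 𝒪, ∃ v : Display S, ∀ p ∈ U, DispLe S v p := by
    intro U hU
    obtain ⟨V, hV, hUV⟩ := href U hU
    obtain ⟨v, -, rfl⟩ := hV
    exact ⟨v, fun p hp => (hUV hp).1.1⟩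
  have hray' : ∀ U ∈ 𝒪', ∃ v : Display S, ∀ p ∈ U, DispLe S v p := by
    intro U hU
    obtain ⟨V, hV, hUV⟩ := href' U hU
    obtain ⟨v, -, rfl⟩ := hV
    exact ⟨v, fun p hp => (hUV hp).1.1⟩
  have hmemM : M ∈ CovSet S := by
    refine ⟨?_, ?_, ?_, ?_, ?_⟩
    · rintro W ⟨U, hU, U', hU', rfl, -⟩
      exact (hop U hU).inter (hop' U' hU')
    · rintro W₁ ⟨U₁, hU₁, U₁', hU₁', rfl, -⟩ W₂ ⟨U₂, hU₂, U₂', hU₂', rfl, -⟩ hne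
      by_cases h1 : U₁ = U₂
      · by_cases h2 : U₁' = U₂'
        · exact absurd (by rw [h1, h2]) hne
        · exact Disjoint.mono Set.inter_subset_right Set.inter_subset_right
            (hdisj' hU₁' hU₂' h2)
      · exact Disjoint.mono Set.inter_subset_left Set.inter_subset_left
          (hdisj hU₁ hU₂ h1)
    · rintro W ⟨U, hU, U', hU', rfl, hWne⟩
      obtain ⟨x₀, hx₀⟩ := hWne
      obtain ⟨v, hv⟩ := hray U hU
      obtain ⟨v', hv'⟩ := hray' U' hU'
      refine ⟨x₀, hx₀, ?_⟩
      intro y hy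
      have hseg : ∀ (a b : Display S), a ∈ U ∩ U' → b ∈ U ∩ U' → DispLe S a b →
          JoinedIn (U ∩ U') a b := by
        intro a b ha hb hab
        apply joinedIn_of_segment_subset hS hab
        intro t h1 h2
        constructor
        · exact segment_mem hS (hpc U hU) hv ha.1 hb.1 (le_lift a h1) h2
        · exact segment_mem hS (hpc' U' hU') hv' ha.2 hb.2 (le_lift a h1) h2
      rcases le_total x₀.1 y.1 with h | h
      · exact hseg x₀ y hx₀ hy
          (le_of_le_of_le_of_height_le (hv x₀ hx₀.1) (hv y hy.1) h)
      · exact (hseg y x₀ hy hx₀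
          (le_of_le_of_le_of_height_le (hv y hy.1) (hv x₀ hx₀.1) h)).symm
    · rintro W ⟨U, hU, U', hU', rfl, -⟩
      obtain ⟨V, hV, hUV⟩ := href U hU
      exact ⟨V, hV, Set.inter_subset_left.trans hUV⟩
    · have hM_union : ⋃₀ M = ⋃₀ 𝒪 ∩ ⋃₀ 𝒪' := by
        apply Set.Subset.antisymm
        · rintro x ⟨W, ⟨U, hU, U', hU', rfl, -⟩, hxW⟩
          exact ⟨⟨U, hU, hxW.1⟩, ⟨U', hU', hxW.2⟩⟩
        · rintro x ⟨⟨U, hU, hxU⟩, ⟨U', hU', hxU'⟩⟩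
          exact ⟨U ∩ U', ⟨U, hU, U', hU', rfl, ⟨x, hxU, hxU'⟩⟩, hxU, hxU'⟩
      rw [hM_union, Set.compl_inter]
      exact dispMeasure_union_null hnull hnull'
  refine ⟨hmemM, ?_, ?_, ?_⟩
  · rintro W ⟨U, hU, U', hU', rfl, -⟩
    exact ⟨U, hU, Set.inter_subset_left⟩
  · rintro W ⟨U, hU, U', hU', rfl, -⟩
    exact ⟨U', hU', Set.inter_subset_right⟩
  · rintro P hP hrP hrP' V hV
    obtain ⟨x, hxV, -⟩ := hP.2.2.1 V hV
    obtain ⟨U, hU, hVU⟩ := hrP V hV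
    obtain ⟨U', hU', hVU'⟩ := hrP' V hV
    exact ⟨U ∩ U', ⟨U, hU, U', hU', rfl, ⟨x, hVU hxV, hVU' hxV⟩⟩,
      Set.subset_inter hVU hVU'⟩

end AuxMT

/-- `Cov(S)` is a lattice for the refinement order: the path components of
the union of two coverings give their least upper bound, and the pairwise (nonempty)
intersections give their greatest lower bound. -/
theorem covSet_lattice (S : PersistentSet)
    (hS : IsAbstractMergeTree S) (hreg : RegularPS S)
    (𝒪 𝒪' : Set (Set (Display S))) (h𝒪 : 𝒪 ∈ CovSet S) (h𝒪' : 𝒪' ∈ CovSet S) :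
    (let J : Set (Set (Display S)) :=
      {W | ∃ x ∈ ⋃₀ (𝒪 ∪ 𝒪'), W = @pathComponentIn _ (dispTopology S) (⋃₀ (𝒪 ∪ 𝒪')) x}
     J ∈ CovSet S ∧ Refines 𝒪 J ∧ Refines 𝒪' J ∧
      ∀ P ∈ CovSet S, Refines 𝒪 P → Refines 𝒪' P → Refines J P) ∧
    (let M : Set (Set (Display S)) :=
      {W | ∃ U ∈ 𝒪, ∃ U' ∈ 𝒪', W = U ∩ U' ∧ W.Nonempty}
     M ∈ CovSet S ∧ Refines M 𝒪 ∧ Refines M 𝒪' ∧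
      ∀ P ∈ CovSet S, Refines P 𝒪 → Refines P 𝒪' → Refines P M) := by
  exact ⟨AuxMT.partJ S hS hreg 𝒪 𝒪' h𝒪 h𝒪', AuxMT.partM S hS hreg 𝒪 𝒪' h𝒪 h𝒪'⟩
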